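/- For every g ∈ SL(2,ℂ) there exists a unique real 4×4 matrix λ_g (rows and columns indexed by 0,1,2,3) such that Σ_{i=0}^{3} (λ_g x)_i σ_i = g (Σ_{j=0}^{3} x_j σ_j) g* for all x ∈ ℝ⁴ (g* the conjugate transpose of g); moreover this matrix satisfies λ_gᵀ η λ_g = η, det(λ_g) = 1, and (λ_g)_{00} ≥ 1 (i.e. λ_g belongs to the proper orthochronous Lorentz group SO₀(1,3)). -/

import Mathlib

open Matrix Complex

noncomputable section

/-- The Pauli matrices σ₀, σ₁, σ₂, σ₃. -/
def pauli : Fin 4 → Matrix (Fin 2) (Fin 2) ℂ :=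
  ![!![1, 0; 0, 1], !![0, 1; 1, 0], !![0, -I; I, 0], !![1, 0; 0, -1]]

/-- The Minkowski metric η = diag(1,-1,-1,-1). -/
def minkEta : Matrix (Fin 4) (Fin 4) ℝ :=
  !![1, 0, 0, 0; 0, -1, 0, 0; 0, 0, -1, 0; 0, 0, 0, -1]

/-- `Λ` is the matrix λ_g associated with `g`:
`Σ_i (Λ x)_i σ_i = g (Σ_j x_j σ_j) g*` for all `x ∈ ℝ⁴`. -/
def IsLorentzPair (g : Matrix (Fin 2) (Fin 2) ℂ) (Λ : Matrix (Fin 4) (Fin 4) ℝ) : Prop :=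
  ∀ x : Fin 4 → ℝ,
    ∑ i, ((Λ.mulVec x i : ℝ) : ℂ) • pauli i
      = g * (∑ j, ((x j : ℝ) : ℂ) • pauli j) * gᴴ

/-- The explicit matrix λ_g in terms of the real and imaginary parts of the entries of `g`. -/
def lamMat (ar ai br bi cr ci dr di : ℝ) : Matrix (Fin 4) (Fin 4) ℝ :=
!![(1/2)*ar*ar + (1/2)*ai*ai + (1/2)*br*br + (1/2)*bi*bi + (1/2)*cr*cr + (1/2)*ci*ci + (1/2)*dr*dr + (1/2)*di*di, ar*br + ai*bi + cr*dr + ci*di, -ar*bi + ai*br - cr*di + ci*dr, (1/2)*ar*ar + (1/2)*ai*ai - (1/2)*br*br - (1/2)*bi*bi + (1/2)*cr*cr + (1/2)*ci*ci - (1/2)*dr*dr - (1/2)*di*di;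
   ar*cr + ai*ci + br*dr + bi*di, ar*dr + ai*di + br*cr + bi*ci, -ar*di + ai*dr + br*ci - bi*cr, ar*cr + ai*ci - br*dr - bi*di;
   ar*ci - ai*cr + br*di - bi*dr, ar*di - ai*dr + br*ci - bi*cr, ar*dr + ai*di - br*cr - bi*ci, ar*ci - ai*cr - br*di + bi*dr;
   (1/2)*ar*ar + (1/2)*ai*ai + (1/2)*br*br + (1/2)*bi*bi - (1/2)*cr*cr - (1/2)*ci*ci - (1/2)*dr*dr - (1/2)*di*di, ar*br + ai*bi - cr*dr - ci*di, -ar*bi + ai*br + cr*di - ci*dr, (1/2)*ar*ar + (1/2)*ai*ai - (1/2)*br*br - (1/2)*bi*bi - (1/2)*cr*cr - (1/2)*ci*ci + (1/2)*dr*dr + (1/2)*di*di]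

lemma pair_lamMat (g : Matrix (Fin 2) (Fin 2) ℂ) :
    IsLorentzPair g (lamMat (g 0 0).re (g 0 0).im (g 0 1).re (g 0 1).im
      (g 1 0).re (g 1 0).im (g 1 1).re (g 1 1).im) := by
  intro x
  ext i j
  fin_cases i <;> fin_cases j <;>
    simp [lamMat, pauli, Matrix.mulVec, dotProduct, Fin.sum_univ_four,
      Matrix.mul_apply, Fin.sum_univ_succ, Matrix.conjTranspose_apply, Complex.ext_iff] <;>
    refine ⟨by ring, by ring⟩

lemma vec_eq (c d : Fin 4 → ℝ)
    (h : ∑ i, ((c i : ℝ) : ℂ) • pauli i = ∑ i, ((d i : ℝ) : ℂ) • pauli i) : c = d := by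
  have h00 := congrFun (congrFun h 0) 0
  have h11 := congrFun (congrFun h 1) 1
  have h01 := congrFun (congrFun h 0) 1
  simp [pauli, Fin.sum_univ_four, Complex.ext_iff] at h00 h11 h01
  funext i
  fin_cases i <;> simp <;> [linarith; linarith [h01.1]; linarith [h01.2]; linarith]

lemma pair_unique (g : Matrix (Fin 2) (Fin 2) ℂ) (Λ₁ Λ₂ : Matrix (Fin 4) (Fin 4) ℝ)
    (h1 : IsLorentzPair g Λ₁) (h2 : IsLorentzPair g Λ₂) : Λ₁ = Λ₂ := by
  ext i j
  have := vec_eq _ _ ((h1 (Pi.single j 1)).trans (h2 (Pi.single j 1)).symm)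
  have := congrFun this i
  simpa [Matrix.mulVec_single] using this

set_option maxHeartbeats 1000000 in
lemma lam_eta (ar ai br bi cr ci dr di : ℝ)
    (hre : ar*dr - ai*di - br*cr + bi*ci = 1)
    (him : ar*di + ai*dr - br*ci - bi*cr = 0) :
    (lamMat ar ai br bi cr ci dr di)ᵀ * minkEta * lamMat ar ai br bi cr ci dr di
    = minkEta := by
  ext i j
  fin_cases i <;> fin_cases j <;>
    simp only [lamMat, minkEta, Matrix.mul_apply, Matrix.transpose_apply, Fin.sum_univ_four,
      Fin.isValue, Matrix.of_apply, Matrix.cons_val', Matrix.cons_val_zero, Matrix.cons_val_one,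
      Matrix.cons_val_two, Matrix.cons_val_three, Matrix.tail_cons, Matrix.head_cons,
      Matrix.empty_val', Matrix.cons_val_fin_one, Matrix.head_fin_const,
      Nat.succ_eq_add_one, Nat.reduceAdd, Fin.reduceFinMk] <;>
    first
      | linear_combination
          (((ar*dr - ai*di - br*cr + bi*ci) + 1) * hre
            + (ar*di + ai*dr - br*ci - bi*cr) * him)
      | linear_combination
          (-((ar*dr - ai*di - br*cr + bi*ci) + 1) * hre
            - (ar*di + ai*dr - br*ci - bi*cr) * him)
      | ring

set_option maxHeartbeats 1000000 in
lemma lam_det (ar ai br bi cr ci dr di : ℝ)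
    (hre : ar*dr - ai*di - br*cr + bi*ci = 1)
    (him : ar*di + ai*dr - br*ci - bi*cr = 0) :
    (lamMat ar ai br bi cr ci dr di).det = 1 := by
  simp [lamMat, Matrix.det_succ_row_zero, Fin.sum_univ_succ, Fin.succAbove,
    Matrix.det_fin_three, Fin.castSucc, Fin.castAdd, Fin.castLE]
  linear_combination
    (((ar*dr - ai*di - br*cr + bi*ci) + 1) *
      ((ar*dr - ai*di - br*cr + bi*ci)^2 + (ar*di + ai*dr - br*ci - bi*cr)^2 + 1)) * hre
    + ((ar*di + ai*dr - br*ci - bi*cr) *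
      ((ar*dr - ai*di - br*cr + bi*ci)^2 + (ar*di + ai*dr - br*ci - bi*cr)^2 + 1)) * him

lemma lam_00 (ar ai br bi cr ci dr di : ℝ)
    (hre : ar*dr - ai*di - br*cr + bi*ci = 1) :
    1 ≤ lamMat ar ai br bi cr ci dr di 0 0 := by
  simp only [lamMat, Matrix.of_apply, Matrix.cons_val', Matrix.cons_val_zero,
    Matrix.empty_val', Matrix.cons_val_fin_one]
  nlinarith [sq_nonneg (ar - dr), sq_nonneg (ai + di), sq_nonneg (br + cr), sq_nonneg (bi - ci)]

/-- For every `g ∈ SL(2,ℂ)` there is a unique real 4×4 matrix `λ_g` with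
`Σ_i (λ_g x)_i σ_i = g (Σ_j x_j σ_j) g*` for all `x`, and it belongs to the proper
orthochronous Lorentz group: `λ_gᵀ η λ_g = η`, `det λ_g = 1`, `(λ_g)₀₀ ≥ 1`. -/
theorem lorentz_matrix_exists_unique (g : Matrix (Fin 2) (Fin 2) ℂ) (hg : g.det = 1) :
    (∃! Λ : Matrix (Fin 4) (Fin 4) ℝ, IsLorentzPair g Λ) ∧
    ∀ Λ : Matrix (Fin 4) (Fin 4) ℝ, IsLorentzPair g Λ →
      Λᵀ * minkEta * Λ = minkEta ∧ Λ.det = 1 ∧ 1 ≤ Λ 0 0 := by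
  rw [Matrix.det_fin_two] at hg
  rw [Complex.ext_iff] at hg
  simp only [Complex.sub_re, Complex.sub_im, Complex.mul_re, Complex.mul_im,
    Complex.one_re, Complex.one_im] at hg
  obtain ⟨hre, him⟩ := hg
  have hre' : (g 0 0).re * (g 1 1).re - (g 0 0).im * (g 1 1).im
      - (g 0 1).re * (g 1 0).re + (g 0 1).im * (g 1 0).im = 1 := by linarith
  have him' : (g 0 0).re * (g 1 1).im + (g 0 0).im * (g 1 1).re
      - (g 0 1).re * (g 1 0).im - (g 0 1).im * (g 1 0).re = 0 := by linarith
  constructor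
  · exact ⟨_, pair_lamMat g, fun Λ h => pair_unique g Λ _ h (pair_lamMat g)⟩
  · intro Λ h
    have hΛ : Λ = lamMat (g 0 0).re (g 0 0).im (g 0 1).re (g 0 1).im
        (g 1 0).re (g 1 0).im (g 1 1).re (g 1 1).im :=
      pair_unique g Λ _ h (pair_lamMat g)
    subst hΛ
    exact ⟨lam_eta _ _ _ _ _ _ _ _ hre' him', lam_det _ _ _ _ _ _ _ _ hre' him',
      lam_00 _ _ _ _ _ _ _ _ hre'⟩
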